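/- Let M be a matroid, let C, C1, ..., Cℓ be circuits of M, and let u1, ..., uℓ, v be distinct elements such that: (1) ui ∈ C ∩ Ci for every i ∈ [ℓ]; (2) ui ∉ Cj for all distinct i, j ∈ [ℓ]; (3) v ∈ C \ (C1 ∪ ... ∪ Cℓ). Then there exists a circuit C' of M with C' ⊆ (C ∪ C1 ∪ ... ∪ Cℓ) \ {u1, ..., uℓ}. -/

import Mathlib

open Set

/-- A circuit of a matroid is an inclusion-wise minimal dependent set. -/
def Matroid.IsCircuit' {α : Type*} (M : Matroid α) (C : Set α) : Prop :=
  M.Dep C ∧ ∀ ⦃D : Set α⦄, D ⊂ C → M.Indep D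

namespace Matroid

variable {α : Type*} {M : Matroid α} {C X : Set α} {x : α}

lemma IsCircuit'.mem_closure_diff (hC : M.IsCircuit' C) (hx : x ∈ C) :
    x ∈ M.closure (C \ {x}) := by
  have hind : M.Indep (C \ {x}) := hC.2 (Set.sdiff_singleton_ssubset.2 hx)
  have hins : insert x (C \ {x}) = C := by
    rw [Set.insert_diff_singleton, Set.insert_eq_self.2 hx]
  have hd : M.Dep (insert x (C \ {x})) := by rw [hins]; exact hC.1
  exact (hind.insert_dep_iff.1 hd).1

lemma Dep.exists_isCircuit' (hX : M.Dep X) : ∃ C, M.IsCircuit' C ∧ C ⊆ X := by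
  obtain ⟨I, hI⟩ := M.exists_isBasis X hX.subset_ground
  have hIX : I ≠ X := by rintro rfl; exact hX.not_indep hI.indep
  obtain ⟨e, heX, heI⟩ := exists_of_ssubset (hI.subset.ssubset_of_ne hIX)
  have he : e ∈ M.closure I := hI.subset_closure heX
  have heE : e ∈ M.E := M.closure_subset_ground I he
  set S : Set (Set α) := {J | J ⊆ I ∧ e ∈ M.closure J} with hS
  have hSne : S.Nonempty := ⟨I, Subset.rfl, he⟩
  set I₀ : Set α := ⋂₀ S with hI₀
  have hI₀I : I₀ ⊆ I := sInter_subset_of_mem (show I ∈ S from ⟨Subset.rfl, he⟩)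
  have hI₀ind : M.Indep I₀ := hI.indep.subset hI₀I
  have heI₀ : e ∉ I₀ := fun h => heI (hI₀I h)
  have hecl : e ∈ M.closure I₀ := by
    rw [hI₀, hI.indep.closure_sInter_eq_biInter_closure_of_forall_subset hSne
      (fun J hJ => hJ.1)]
    exact mem_iInter₂.2 fun J hJ => hJ.2
  refine ⟨insert e I₀, ⟨?_, ?_⟩, insert_subset heX (hI₀I.trans hI.subset)⟩
  · exact hI₀ind.insert_dep_iff.2 ⟨hecl, heI₀⟩
  · intro D hD
    -- D ⊂ insert e I₀; find x ∈ insert e I₀ \ D and show insert e I₀ \ {x} indep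
    obtain ⟨x, hx, hxD⟩ := exists_of_ssubset hD
    have hDsub : D ⊆ insert e I₀ \ {x} :=
      fun y hy => ⟨hD.subset hy, fun h => hxD (h ▸ hy)⟩
    refine Matroid.Indep.subset ?_ hDsub
    rcases eq_or_ne x e with rfl | hxe
    · have : insert x I₀ \ {x} = I₀ := by
        rw [Set.insert_diff_of_mem _ (mem_singleton x), Set.diff_singleton_eq_self heI₀]
      rw [this]; exact hI₀ind
    · have hxI₀ : x ∈ I₀ := ((mem_insert_iff.1 hx).resolve_left hxe)
      have heq : insert e I₀ \ {x} = insert e (I₀ \ {x}) :=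
        (Set.insert_diff_singleton_comm (fun h => hxe h.symm) _).symm
      rw [heq]
      have hind' : M.Indep (I₀ \ {x}) := hI₀ind.subset diff_subset
      have hecl' : e ∉ M.closure (I₀ \ {x}) := by
        intro h
        have : I₀ ⊆ I₀ \ {x} :=
          sInter_subset_of_mem (show I₀ \ {x} ∈ S from ⟨diff_subset.trans hI₀I, h⟩)
        exact (this hxI₀).2 rfl
      exact (hind'.insert_indep_iff_of_notMem (fun h => heI₀ h.1)).2 ⟨heE, hecl'⟩

end Matroid

theorem circuit_union {α : Type*} (M : Matroid α) (ℓ : ℕ) (C : Set α)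
    (Ci : Fin ℓ → Set α) (u : Fin ℓ → α) (v : α)
    (hC : M.IsCircuit' C) (hCi : ∀ i, M.IsCircuit' (Ci i))
    (hu_inj : Function.Injective u) (hv_u : v ∉ Set.range u)
    (hU1 : ∀ i, u i ∈ C ∩ Ci i)
    (hU2 : ∀ i j, i ≠ j → u i ∉ Ci j)
    (hU3 : v ∈ C \ ⋃ i, Ci i) :
    ∃ C' : Set α, M.IsCircuit' C' ∧ C' ⊆ (C ∪ ⋃ i, Ci i) \ Set.range u := by
  classical
  set Y : Set α := C ∪ ⋃ i, Ci i with hY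
  set X : Set α := Y \ Set.range u with hXdef
  have hYE : Y ⊆ M.E :=
    Set.union_subset hC.1.subset_ground (Set.iUnion_subset fun i => (hCi i).1.subset_ground)
  have hXE : X ⊆ M.E := Set.diff_subset.trans hYE
  -- each Cᵢ \ {uᵢ} ⊆ X \ {v}
  have hCiX : ∀ i, Ci i \ {u i} ⊆ X \ {v} := by
    intro i x hx
    refine ⟨⟨Or.inr (Set.mem_iUnion.2 ⟨i, hx.1⟩), ?_⟩, ?_⟩
    · rintro ⟨j, rfl⟩
      rcases eq_or_ne j i with rfl | hji
      · exact hx.2 rfl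
      · exact hU2 j i hji hx.1
    · rintro rfl
      exact hU3.2 (Set.mem_iUnion.2 ⟨i, hx.1⟩)
  -- range u ⊆ closure (X \ {v})
  have hucl : ∀ i, u i ∈ M.closure (X \ {v}) := fun i =>
    M.closure_subset_closure (hCiX i) ((hCi i).mem_closure_diff (hU1 i).2)
  -- Y \ {v} ⊆ closure (X \ {v})
  have hYcl : Y \ {v} ⊆ M.closure (X \ {v}) := by
    intro x hx
    by_cases hxu : x ∈ Set.range u
    · obtain ⟨i, rfl⟩ := hxu; exact hucl i
    · exact M.subset_closure (X \ {v}) (Set.diff_subset.trans hXE) ⟨⟨hx.1, hxu⟩, hx.2⟩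
  -- v ∈ closure (X \ {v})
  have hvcl : v ∈ M.closure (X \ {v}) := by
    have h1 : v ∈ M.closure (C \ {v}) := hC.mem_closure_diff hU3.1
    have h2 : C \ {v} ⊆ M.closure (X \ {v}) :=
      fun x hx => hYcl ⟨Or.inl hx.1, hx.2⟩
    exact M.closure_subset_closure_of_subset_closure h2 h1
  have hvX : v ∈ X := ⟨Or.inl hU3.1, hv_u⟩
  -- X is dependent
  have hXdep : M.Dep X := by
    rw [Matroid.dep_iff, and_iff_left hXE]
    intro hind
    exact hind.notMem_closure_diff_of_mem hvX hvcl
  obtain ⟨C', hC', hC'X⟩ := hXdep.exists_isCircuit'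
  exact ⟨C', hC', hC'X⟩
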